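/- On words of length n, for every letter a: ν_k ∘ sh_a − sh_a ∘ ν_k = (n + 2 − k)·sh_a ∘ ν_{k−1} + Σ_{b=1}^{n} sh_b ∘ θ_{b,a} ∘ ν_{k−1}, where the ν operators on the left of sh act on length-(n+1) words and those on the right act on length-n words. -/

import Mathlib

set_option linter.unusedSectionVars false
set_option maxHeartbeats 1000000
set_option maxRecDepth 4000

/-- Insertion operator: `shOp A a` sends a word `w` (basis element of the free
`ℂ`-vector space on words) to the sum of the words obtained by inserting the
letter `a` at each of the `w.length + 1` possible positions. -/
noncomputable def shOp (A : Type) [DecidableEq A] (a : A) :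
    (List A →₀ ℂ) →ₗ[ℂ] (List A →₀ ℂ) :=
  Finsupp.lift (List A →₀ ℂ) ℂ (List A)
    (fun w => ∑ i : Fin (w.length + 1), Finsupp.single (List.insertIdx w i a) 1)

/-- Deletion operator: `delOp A a` sends a word `w` to the sum, over all positions
`i` with `w_i = a`, of the word obtained by deleting position `i`. -/
noncomputable def delOp (A : Type) [DecidableEq A] (a : A) :
    (List A →₀ ℂ) →ₗ[ℂ] (List A →₀ ℂ) :=
  Finsupp.lift (List A →₀ ℂ) ℂ (List A)
    (fun w => ∑ i : Fin w.length,
      if w.get i = a then Finsupp.single (w.eraseIdx i) 1 else 0)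

/-- Replacement operator: `thetaOp A b a` sends a word `w` to the sum, over all
positions `i` with `w_i = b`, of the word obtained by replacing the letter at
position `i` by `a`. -/
noncomputable def thetaOp (A : Type) [DecidableEq A] (b a : A) :
    (List A →₀ ℂ) →ₗ[ℂ] (List A →₀ ℂ) :=
  Finsupp.lift (List A →₀ ℂ) ℂ (List A)
    (fun w => ∑ i : Fin w.length,
      if w.get i = b then Finsupp.single (w.set i a) 1 else 0)



noncomputable def consOp (A : Type) [DecidableEq A] (c : A) :
    (List A →₀ ℂ) →ₗ[ℂ] (List A →₀ ℂ) :=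
  Finsupp.lmapDomain ℂ ℂ (List.cons c)

noncomputable def lenOp (A : Type) [DecidableEq A] :
    (List A →₀ ℂ) →ₗ[ℂ] (List A →₀ ℂ) :=
  Finsupp.lift (List A →₀ ℂ) ℂ (List A)
    (fun w => ((w.length + 1 : ℕ) : ℂ) • Finsupp.single w 1)

variable {A : Type} [DecidableEq A]

lemma lift_single {M : Type*} [AddCommMonoid M] [Module ℂ M] (g : List A → M) (w : List A) :
    Finsupp.lift M ℂ (List A) g (Finsupp.single w 1) = g w := by
  simp [Finsupp.lift_apply, Finsupp.sum_single_index]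

lemma shOp_single (a : A) (w : List A) :
    shOp A a (Finsupp.single w 1)
      = ∑ i : Fin (w.length + 1), Finsupp.single (List.insertIdx w i a) 1 :=
  lift_single _ w

lemma delOp_single (a : A) (w : List A) :
    delOp A a (Finsupp.single w 1)
      = ∑ i : Fin w.length,
          if w.get i = a then Finsupp.single (w.eraseIdx i) 1 else 0 :=
  lift_single _ w

lemma thetaOp_single (b a : A) (w : List A) :
    thetaOp A b a (Finsupp.single w 1)
      = ∑ i : Fin w.length,
          if w.get i = b then Finsupp.single (w.set i a) 1 else 0 :=
  lift_single _ w

lemma lenOp_single (w : List A) :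
    lenOp A (Finsupp.single w 1)
      = ((w.length + 1 : ℕ) : ℂ) • Finsupp.single w 1 :=
  lift_single _ w

lemma consOp_single (c : A) (w : List A) :
    consOp A c (Finsupp.single w 1) = Finsupp.single (c :: w) 1 := by
  simp [consOp, Finsupp.lmapDomain_apply, Finsupp.mapDomain_single]

/-- extensionality helper -/
lemma lhom_single_ext {M : Type*} [AddCommMonoid M] [Module ℂ M]
    {f g : (List A →₀ ℂ) →ₗ[ℂ] M}
    (h : ∀ w : List A, f (Finsupp.single w 1) = g (Finsupp.single w 1)) : f = g := by
  refine Finsupp.lhom_ext fun w b => ?_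
  have : (Finsupp.single w b : List A →₀ ℂ) = b • Finsupp.single w 1 := by
    rw [Finsupp.smul_single, smul_eq_mul, mul_one]
  rw [this, map_smul, map_smul, h w]


variable {A : Type} [DecidableEq A]

lemma shOp_single_cons (a c : A) (w : List A) :
    shOp A a (Finsupp.single (c :: w) 1)
      = Finsupp.single (a :: c :: w) 1 + consOp A c (shOp A a (Finsupp.single w 1)) := by
  rw [shOp_single, shOp_single, map_sum]
  erw [Fin.sum_univ_succ (n := w.length + 1)]
  simp [consOp_single, List.insertIdx]

lemma delOp_single_cons (b c : A) (w : List A) :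
    delOp A b (Finsupp.single (c :: w) 1)
      = (if c = b then Finsupp.single w 1 else 0)
        + consOp A c (delOp A b (Finsupp.single w 1)) := by
  rw [delOp_single, delOp_single, map_sum]
  erw [Fin.sum_univ_succ (n := w.length)]
  congr 1
  · refine Finset.sum_congr rfl fun i _ => ?_
    rw [apply_ite (consOp A c), map_zero, consOp_single]
    rfl

lemma thetaOp_single_cons (b a c : A) (w : List A) :
    thetaOp A b a (Finsupp.single (c :: w) 1)
      = (if c = b then Finsupp.single (a :: w) 1 else 0)
        + consOp A c (thetaOp A b a (Finsupp.single w 1)) := by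
  rw [thetaOp_single, thetaOp_single, map_sum]
  erw [Fin.sum_univ_succ (n := w.length)]
  congr 1
  · refine Finset.sum_congr rfl fun i _ => ?_
    rw [apply_ite (consOp A c), map_zero, consOp_single]
    rfl

lemma lenOp_single_cons (c : A) (w : List A) :
    lenOp A (Finsupp.single (c :: w) 1)
      = consOp A c (lenOp A (Finsupp.single w 1)) + consOp A c (Finsupp.single w 1) := by
  rw [lenOp_single, lenOp_single, map_smul, consOp_single]
  rw [show ((c :: w).length + 1 : ℕ) = (w.length + 1) + 1 from rfl]
  push_cast
  rw [add_smul, one_smul]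

-- ∀ x versions
lemma sh_cons (a c : A) (x : List A →₀ ℂ) :
    shOp A a (consOp A c x)
      = consOp A a (consOp A c x) + consOp A c (shOp A a x) := by
  have : shOp A a ∘ₗ consOp A c
      = consOp A a ∘ₗ consOp A c + consOp A c ∘ₗ shOp A a :=
    lhom_single_ext fun w => by
      simp only [LinearMap.comp_apply, LinearMap.add_apply, consOp_single,
        shOp_single_cons]
  exact LinearMap.congr_fun this x

lemma del_cons (b c : A) (x : List A →₀ ℂ) :
    delOp A b (consOp A c x)
      = (if c = b then x else 0) + consOp A c (delOp A b x) := by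
  have : delOp A b ∘ₗ consOp A c
      = (if c = b then (LinearMap.id : (List A →₀ ℂ) →ₗ[ℂ] _) else 0)
          + consOp A c ∘ₗ delOp A b :=
    lhom_single_ext fun w => by
      simp only [LinearMap.comp_apply, LinearMap.add_apply, consOp_single,
        delOp_single_cons]
      split_ifs <;> simp
  have h := LinearMap.congr_fun this x
  simpa [apply_ite (fun f : (List A →₀ ℂ) →ₗ[ℂ] (List A →₀ ℂ) => f x)] using h

lemma theta_cons (b a c : A) (x : List A →₀ ℂ) :
    thetaOp A b a (consOp A c x)
      = (if c = b then consOp A a x else 0) + consOp A c (thetaOp A b a x) := by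
  have : thetaOp A b a ∘ₗ consOp A c
      = (if c = b then consOp A a else 0) + consOp A c ∘ₗ thetaOp A b a :=
    lhom_single_ext fun w => by
      simp only [LinearMap.comp_apply, LinearMap.add_apply, consOp_single,
        thetaOp_single_cons]
      split_ifs <;> simp [consOp_single]
  have h := LinearMap.congr_fun this x
  simpa [apply_ite (fun f : (List A →₀ ℂ) →ₗ[ℂ] (List A →₀ ℂ) => f x)] using h

lemma len_cons (c : A) (x : List A →₀ ℂ) :
    lenOp A (consOp A c x) = consOp A c (lenOp A x) + consOp A c x := by
  have : lenOp A ∘ₗ consOp A c = consOp A c ∘ₗ lenOp A + consOp A c :=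
    lhom_single_ext fun w => by
      simp only [LinearMap.comp_apply, LinearMap.add_apply, consOp_single,
        lenOp_single_cons]
  exact LinearMap.congr_fun this x

open Finsupp

lemma shOp_single_nil (a : A) : shOp A a (single ([] : List A) 1) = single [a] 1 := by
  rw [shOp_single]; simp

lemma delOp_single_nil (b : A) : delOp A b (single ([] : List A) 1) = 0 := by
  rw [delOp_single]; simp

lemma thetaOp_single_nil (b a : A) : thetaOp A b a (single ([] : List A) 1) = 0 := by
  rw [thetaOp_single]; simp

lemma del_sh_single (b a : A) : ∀ w : List A,
    delOp A b (shOp A a (single w 1))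
      = shOp A a (delOp A b (single w 1)) + thetaOp A b a (single w 1)
        + (if b = a then lenOp A (single w 1) else 0)
  | [] => by
      have h2 : delOp A b (single ([a] : List A) 1)
          = if a = b then single ([] : List A) 1 else 0 := by
        rw [delOp_single]; simp [List.get]
      rw [shOp_single_nil, h2, delOp_single_nil, thetaOp_single_nil, map_zero, lenOp_single]
      simp [eq_comm]
  | c :: v => by
      have IH := del_sh_single b a v
      simp only [shOp_single_cons, map_add, delOp_single_cons, del_cons, IH, sh_cons,
        thetaOp_single_cons, lenOp_single_cons, apply_ite (consOp A a),
        apply_ite (shOp A a), apply_ite (consOp A c), map_zero, consOp_single, map_add]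
      rcases eq_or_ne b a with rfl | hba
      · rcases eq_or_ne c b with rfl | hcb
        · simp only [if_pos rfl, ↓reduceIte]; abel
        · simp only [if_pos rfl, if_neg hcb, ↓reduceIte]; abel
      · rcases eq_or_ne c b with rfl | hcb
        · simp only [if_pos rfl, if_neg hba, if_neg (Ne.symm hba)]; abel
        · simp only [if_neg hba, if_neg hcb, if_neg (Ne.symm hba)]; abel


lemma theta_sh_single (b a c : A) : ∀ w : List A,
    thetaOp A b a (shOp A c (single w 1))
      = shOp A c (thetaOp A b a (single w 1)) + (if c = b then shOp A a (single w 1) else 0)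
  | [] => by
      have h1 : thetaOp A b a (single ([c] : List A) 1)
          = if c = b then single ([a] : List A) 1 else 0 := by
        rw [thetaOp_single]; simp [List.get, List.set]
      rw [shOp_single_nil, h1, thetaOp_single_nil, map_zero, shOp_single_nil]
      split_ifs <;> simp
  | d :: v => by
      have IH := theta_sh_single b a c v
      simp only [shOp_single_cons, map_add, thetaOp_single_cons, theta_cons, IH, sh_cons,
        apply_ite (consOp A a), apply_ite (consOp A d), apply_ite (shOp A c),
        map_zero, consOp_single, map_add]
      all_goals split_ifs <;> (try subst_vars) <;> (try simp_all [consOp_single]) <;> (try abel)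

lemma del_theta_single (c b a : A) : ∀ w : List A,
    delOp A c (thetaOp A b a (single w 1))
      = thetaOp A b a (delOp A c (single w 1)) + (if c = a then delOp A b (single w 1) else 0)
  | [] => by
      rw [thetaOp_single_nil, delOp_single_nil, delOp_single_nil, map_zero, map_zero]
      simp
  | d :: v => by
      have IH := del_theta_single c b a v
      simp only [thetaOp_single_cons, map_add, delOp_single_cons, del_cons, IH, theta_cons,
        apply_ite (consOp A a), apply_ite (consOp A d), apply_ite (thetaOp A b a),
        apply_ite (delOp A c), apply_ite (delOp A b),
        map_zero, consOp_single, map_add]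
      all_goals split_ifs <;> (try subst_vars) <;> (try simp_all [consOp_single]) <;> (try abel)

lemma del_len_single (c : A) : ∀ w : List A,
    delOp A c (lenOp A (single w 1))
      = lenOp A (delOp A c (single w 1)) + delOp A c (single w 1)
  | [] => by
      rw [lenOp_single, delOp_single_nil, map_smul, delOp_single_nil, map_zero]
      simp
  | d :: v => by
      have IH := del_len_single c v
      simp only [lenOp_single_cons, map_add, delOp_single_cons, del_cons, IH, len_cons,
        apply_ite (lenOp A), apply_ite (consOp A d), map_zero, consOp_single, map_add]
      all_goals split_ifs <;> (try subst_vars) <;> (try simp_all [consOp_single]) <;> (try abel)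

lemma sh_sh_single (a b : A) : ∀ w : List A,
    shOp A a (shOp A b (single w 1)) = shOp A b (shOp A a (single w 1))
  | [] => by
      rw [shOp_single_nil, shOp_single_nil, shOp_single_cons, shOp_single_cons,
        shOp_single_nil, shOp_single_nil, consOp_single, consOp_single]
      abel
  | d :: v => by
      have IH := sh_sh_single a b v
      simp only [shOp_single_cons, map_add, sh_cons, IH, consOp_single, map_add]
      abel

lemma del_del_single (a b : A) : ∀ w : List A,
    delOp A a (delOp A b (single w 1)) = delOp A b (delOp A a (single w 1))
  | [] => by rw [delOp_single_nil, delOp_single_nil, map_zero, map_zero]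
  | d :: v => by
      have IH := del_del_single a b v
      simp only [delOp_single_cons, map_add, del_cons, IH,
        apply_ite (delOp A a), apply_ite (delOp A b), apply_ite (consOp A d),
        map_zero, consOp_single, map_add]
      all_goals split_ifs <;> (try subst_vars) <;> (try simp_all [consOp_single]) <;> (try abel)

-- x-level versions
lemma del_sh (b a : A) (x : List A →₀ ℂ) :
    delOp A b (shOp A a x)
      = shOp A a (delOp A b x) + thetaOp A b a x + (if b = a then lenOp A x else 0) := by
  have : delOp A b ∘ₗ shOp A a
      = shOp A a ∘ₗ delOp A b + thetaOp A b a + (if b = a then lenOp A else 0) :=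
    lhom_single_ext fun w => by
      have := del_sh_single b a w
      simp only [LinearMap.comp_apply, LinearMap.add_apply, this]
      split_ifs <;> simp
  have h := LinearMap.congr_fun this x
  simpa [apply_ite (fun f : (List A →₀ ℂ) →ₗ[ℂ] (List A →₀ ℂ) => f x)] using h

lemma theta_sh (b a c : A) (x : List A →₀ ℂ) :
    thetaOp A b a (shOp A c x)
      = shOp A c (thetaOp A b a x) + (if c = b then shOp A a x else 0) := by
  have : thetaOp A b a ∘ₗ shOp A c
      = shOp A c ∘ₗ thetaOp A b a + (if c = b then shOp A a else 0) :=
    lhom_single_ext fun w => by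
      have := theta_sh_single b a c w
      simp only [LinearMap.comp_apply, LinearMap.add_apply, this]
      split_ifs <;> simp
  have h := LinearMap.congr_fun this x
  simpa [apply_ite (fun f : (List A →₀ ℂ) →ₗ[ℂ] (List A →₀ ℂ) => f x)] using h

lemma del_theta (c b a : A) (x : List A →₀ ℂ) :
    delOp A c (thetaOp A b a x)
      = thetaOp A b a (delOp A c x) + (if c = a then delOp A b x else 0) := by
  have : delOp A c ∘ₗ thetaOp A b a
      = thetaOp A b a ∘ₗ delOp A c + (if c = a then delOp A b else 0) :=
    lhom_single_ext fun w => by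
      have := del_theta_single c b a w
      simp only [LinearMap.comp_apply, LinearMap.add_apply, this]
      split_ifs <;> simp
  have h := LinearMap.congr_fun this x
  simpa [apply_ite (fun f : (List A →₀ ℂ) →ₗ[ℂ] (List A →₀ ℂ) => f x)] using h

lemma del_len (c : A) (x : List A →₀ ℂ) :
    delOp A c (lenOp A x) = lenOp A (delOp A c x) + delOp A c x := by
  have : delOp A c ∘ₗ lenOp A = lenOp A ∘ₗ delOp A c + delOp A c :=
    lhom_single_ext fun w => by
      simp only [LinearMap.comp_apply, LinearMap.add_apply, del_len_single c w]
  exact LinearMap.congr_fun this x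

lemma sh_sh (a b : A) (x : List A →₀ ℂ) :
    shOp A a (shOp A b x) = shOp A b (shOp A a x) := by
  have : shOp A a ∘ₗ shOp A b = shOp A b ∘ₗ shOp A a :=
    lhom_single_ext fun w => by
      simp only [LinearMap.comp_apply, sh_sh_single a b w]
  exact LinearMap.congr_fun this x

lemma del_del (a b : A) (x : List A →₀ ℂ) :
    delOp A a (delOp A b x) = delOp A b (delOp A a x) := by
  have : delOp A a ∘ₗ delOp A b = delOp A b ∘ₗ delOp A a :=
    lhom_single_ext fun w => by
      simp only [LinearMap.comp_apply, del_del_single a b w]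
  exact LinearMap.congr_fun this x

/-- Composition `sh_{a₁} ∘ sh_{a₂} ∘ ⋯ ∘ sh_{a_k}` of insertion operators along a list. -/
noncomputable def shChain (A : Type) [DecidableEq A] (l : List A) :
    (List A →₀ ℂ) →ₗ[ℂ] (List A →₀ ℂ) :=
  l.foldr (fun c f => (shOp A c).comp f) LinearMap.id

/-- Composition `∂_{a₁} ∘ ∂_{a₂} ∘ ⋯ ∘ ∂_{a_k}` of deletion operators along a list. -/
noncomputable def delChain (A : Type) [DecidableEq A] (l : List A) :
    (List A →₀ ℂ) →ₗ[ℂ] (List A →₀ ℂ) :=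
  l.foldr (fun c f => (delOp A c).comp f) LinearMap.id


@[simp] lemma shChain_nil (x : List A →₀ ℂ) : shChain A [] x = x := rfl
@[simp] lemma delChain_nil (x : List A →₀ ℂ) : delChain A [] x = x := rfl
@[simp] lemma shChain_cons (c : A) (l : List A) (x : List A →₀ ℂ) :
    shChain A (c :: l) x = shOp A c (shChain A l x) := rfl
@[simp] lemma delChain_cons (c : A) (l : List A) (x : List A →₀ ℂ) :
    delChain A (c :: l) x = delOp A c (delChain A l x) := rfl

lemma shChain_eq_prod (l : List A) : shChain A l = (l.map (shOp A)).prod := by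
  induction l with
  | nil => rfl
  | cons c l ih => rw [List.map_cons, List.prod_cons, ← ih]; rfl

lemma delChain_eq_prod (l : List A) : delChain A l = (l.map (delOp A)).prod := by
  induction l with
  | nil => rfl
  | cons c l ih => rw [List.map_cons, List.prod_cons, ← ih]; rfl

lemma pairwise_commute_map {f : A → ((List A →₀ ℂ) →ₗ[ℂ] (List A →₀ ℂ))}
    (hf : ∀ a b, Commute (f a) (f b)) (l : List A) : (l.map f).Pairwise Commute := by
  induction l with
  | nil => simp
  | cons c l ih =>
      rw [List.map_cons, List.pairwise_cons]
      exact ⟨fun g hg => by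
        obtain ⟨b, _, rfl⟩ := List.mem_map.mp hg; exact hf c b, ih⟩

lemma shChain_perm {l l' : List A} (h : l.Perm l') : shChain A l = shChain A l' := by
  rw [shChain_eq_prod, shChain_eq_prod]
  exact List.Perm.prod_eq' (h.map _)
    (pairwise_commute_map (fun a b => LinearMap.ext fun x => sh_sh a b x) l)

lemma delChain_perm {l l' : List A} (h : l.Perm l') : delChain A l = delChain A l' := by
  rw [delChain_eq_prod, delChain_eq_prod]
  exact List.Perm.prod_eq' (h.map _)
    (pairwise_commute_map (fun a b => LinearMap.ext fun x => del_del a b x) l)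

lemma perm_getD_cons_eraseIdx (d : A) : ∀ (l : List A) (i : ℕ), i < l.length →
    (l.getD i d :: l.eraseIdx i).Perm l
  | c :: l, 0, _ => by simp
  | c :: l, i + 1, h => by
      simpa using (List.Perm.swap c (l.getD i d) (l.eraseIdx i)).trans
        ((perm_getD_cons_eraseIdx d l i (by simpa using h)).cons c)
  | [], i, h => by simp at h

lemma perm_set (d x : A) : ∀ (l : List A) (i : ℕ), i < l.length →
    (l.set i x).Perm (x :: l.eraseIdx i)
  | c :: l, 0, _ => by simp
  | c :: l, i + 1, h => by
      simpa using ((perm_set d x l i (by simpa using h)).cons c).trans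
        (List.Perm.swap x c (l.eraseIdx i))
  | [], i, h => by simp at h

lemma sh_shChain (a : A) (l : List A) (x : List A →₀ ℂ) :
    shOp A a (shChain A l x) = shChain A l (shOp A a x) := by
  induction l generalizing x with
  | nil => rfl
  | cons c l ih => rw [shChain_cons, sh_sh, ih, shChain_cons]

lemma delChain_len (l : List A) (x : List A →₀ ℂ) :
    delChain A l (lenOp A x)
      = lenOp A (delChain A l x) + (l.length : ℂ) • delChain A l x := by
  induction l generalizing x with
  | nil => simp
  | cons c l ih =>
      rw [delChain_cons, ih, map_add, map_smul, del_len, delChain_cons]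
      simp only [List.length_cons]
      push_cast
      rw [add_smul, one_smul]
      abel

lemma delChain_sh (a : A) (l : List A) (x : List A →₀ ℂ) :
    delChain A l (shOp A a x)
      = shOp A a (delChain A l x)
        + ∑ i ∈ Finset.range l.length,
            thetaOp A (l.getD i a) a (delChain A (l.eraseIdx i) x)
        + ∑ i ∈ Finset.range l.length,
            (if l.getD i a = a then delChain A (l.eraseIdx i) (lenOp A x) else 0) := by
  induction l generalizing x with
  | nil => simp
  | cons c l ih =>
      rw [delChain_cons, ih, map_add, map_add, map_sum, map_sum, del_sh]
      rw [List.length_cons, Finset.sum_range_succ', Finset.sum_range_succ']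
      simp only [List.getD_cons_succ, List.getD_cons_zero, List.eraseIdx_cons_succ,
        List.eraseIdx_cons_zero, delChain_cons, del_theta,
        apply_ite (delOp A c), map_zero]
      have key : ∀ y : List A →₀ ℂ, (if c = a then lenOp A (delChain A l y) else 0)
          + ∑ i ∈ Finset.range l.length,
              (if c = a then delOp A (l.getD i a) (delChain A (l.eraseIdx i) y) else 0)
          = if c = a then delChain A l (lenOp A y) else 0 := by
        intro y
        split_ifs with hca
        · rw [delChain_len]
          have : ∀ i ∈ Finset.range l.length,
              delOp A (l.getD i a) (delChain A (l.eraseIdx i) y) = delChain A l y := by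
            intro i hi
            rw [← delChain_cons, delChain_perm (perm_getD_cons_eraseIdx a l i
              (Finset.mem_range.mp hi))]
          rw [Finset.sum_congr rfl this, Finset.sum_const, Finset.card_range]
          rw [← Nat.cast_smul_eq_nsmul ℂ]
        · simp
      rw [Finset.sum_add_distrib, ← key x]
      abel

lemma theta_shChain (b a : A) (l : List A) (x : List A →₀ ℂ) :
    thetaOp A b a (shChain A l x)
      = shChain A l (thetaOp A b a x)
        + ∑ i ∈ Finset.range l.length,
            (if l.getD i a = b then shChain A (l.set i a) x else 0) := by
  induction l generalizing x with
  | nil => simp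
  | cons c l ih =>
      rw [shChain_cons, theta_sh, ih, map_add, map_sum]
      rw [List.length_cons, Finset.sum_range_succ']
      simp only [List.getD_cons_succ, List.getD_cons_zero, List.set_cons_succ,
        List.set_cons_zero, shChain_cons, apply_ite (shOp A c), map_zero]
      abel

open scoped Classical in
lemma symmetrize {M : Type*} [AddCommMonoid M] [Module ℂ M] (k n : ℕ)
    (G : (Fin k → Fin n) → M) (hG : ∀ (c : Fin k → Fin n) (σ : Equiv.Perm (Fin k)), G (c ∘ σ) = G c) :
    ∑ a ∈ Finset.univ.filter (fun a : Fin k → Fin n => Monotone a), (k.factorial : ℂ) • G a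
      = ∑ c : Fin k → Fin n,
          (((∏ j : Fin n,
            Nat.factorial ((Finset.univ.filter (fun l : Fin k => c l = j)).card) : ℕ) : ℂ)) • G c := by
  calc ∑ a ∈ Finset.univ.filter (fun a : Fin k → Fin n => Monotone a), (k.factorial : ℂ) • G a
      = ∑ a ∈ Finset.univ.filter (fun a : Fin k → Fin n => Monotone a),
          ∑ σ : Equiv.Perm (Fin k), G (a ∘ σ) := by
        refine Finset.sum_congr rfl fun a _ => ?_
        rw [Finset.sum_congr rfl (fun σ _ => hG a σ), Finset.sum_const, Finset.card_univ,
          Fintype.card_perm, Fintype.card_fin, Nat.cast_smul_eq_nsmul]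
    _ = ∑ p ∈ (Finset.univ.filter (fun a : Fin k → Fin n => Monotone a)) ×ˢ
          (Finset.univ : Finset (Equiv.Perm (Fin k))), G (p.1 ∘ p.2) := by
        rw [Finset.sum_product]
    _ = ∑ q ∈ ((Finset.univ : Finset (Fin k → Fin n)) ×ˢ
          (Finset.univ : Finset (Equiv.Perm (Fin k)))).filter
            (fun q => Monotone (q.1 ∘ q.2)), G q.1 := by
        refine Finset.sum_nbij' (i := fun p => (p.1 ∘ p.2, p.2⁻¹))
          (j := fun q => (q.1 ∘ q.2, q.2⁻¹)) ?_ ?_ ?_ ?_ ?_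
        · intro p hp
          simp only [Finset.mem_filter, Finset.mem_product, Finset.mem_univ, true_and] at hp ⊢
          have : (p.1 ∘ ⇑p.2) ∘ ⇑(p.2⁻¹) = p.1 := by funext x; simp
          rw [this]; exact hp.1
        · intro q hq
          simp only [Finset.mem_filter, Finset.mem_product, Finset.mem_univ, true_and] at hq ⊢
          exact ⟨hq, trivial⟩
        · intro p hp
          refine Prod.ext ?_ (by simp)
          show (p.1 ∘ ⇑p.2) ∘ ⇑(p.2⁻¹) = p.1
          funext x; simp
        · intro q hq
          refine Prod.ext ?_ (by simp)
          show (q.1 ∘ ⇑q.2) ∘ ⇑(q.2⁻¹) = q.1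
          funext x; simp
        · intro p hp
          rfl
    _ = ∑ c : Fin k → Fin n, ∑ σ : Equiv.Perm (Fin k),
          (if Monotone (c ∘ σ) then G c else 0) := by
        rw [Finset.sum_filter, Finset.sum_product]
    _ = ∑ c : Fin k → Fin n, ∑ σ : Equiv.Perm (Fin k),
          (if c ∘ σ = c then G c else 0) := by
        refine Finset.sum_congr rfl fun c _ => ?_
        rw [← Finset.sum_filter, ← Finset.sum_filter, Finset.sum_const, Finset.sum_const]
        congr 1
        refine Finset.card_nbij' (i := fun σ => σ * (Tuple.sort c)⁻¹)
          (j := fun τ => τ * Tuple.sort c) ?_ ?_ ?_ ?_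
        · intro σ hσ
          simp only [Finset.mem_coe, Finset.mem_filter, Finset.mem_univ, true_and] at hσ ⊢
          have h1 : c ∘ ⇑σ = c ∘ ⇑(Tuple.sort c) := Tuple.comp_sort_eq_comp_iff_monotone.mpr hσ
          funext x
          have := congrFun h1 ((Tuple.sort c)⁻¹ x)
          simpa [Equiv.Perm.coe_mul] using this
        · intro τ hτ
          simp only [Finset.mem_coe, Finset.mem_filter, Finset.mem_univ, true_and] at hτ ⊢
          have h2 : c ∘ ⇑(τ * Tuple.sort c) = c ∘ ⇑(Tuple.sort c) := by
            funext x
            have := congrFun hτ (Tuple.sort c x)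
            simpa [Equiv.Perm.coe_mul] using this
          rw [h2]
          exact Tuple.monotone_sort c
        · intro σ hσ
          simp [mul_assoc]
        · intro τ hτ
          simp [mul_assoc]
    _ = ∑ c : Fin k → Fin n,
          (((∏ j : Fin n,
            Nat.factorial ((Finset.univ.filter (fun l : Fin k => c l = j)).card) : ℕ) : ℂ)) • G c := by
        refine Finset.sum_congr rfl fun c _ => ?_
        rw [← Finset.sum_filter, Finset.sum_const, Nat.cast_smul_eq_nsmul]
        congr 1
        have h3 := DomMulAct.stabilizer_card c
        rw [Fintype.card_subtype] at h3
        rw [show (Finset.filter (fun σ : Equiv.Perm (Fin k) => c ∘ ⇑σ = c) Finset.univ).card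
            = ∏ i : Fin n, (Fintype.card {a // c a = i}).factorial from h3]
        refine Finset.prod_congr rfl fun j _ => ?_
        rw [Fintype.card_subtype]

open scoped Classical in
/-- The symmetrized shuffling operator
`ν_k = Σ_{1 ≤ a₁ ≤ ⋯ ≤ a_k ≤ n} (1/∏_j #{l : a_l = j}!) · sh_{a₁}∘⋯∘sh_{a_k}∘∂_{a₁}∘⋯∘∂_{a_k}`
on the word algebra over the alphabet `{1,…,n}` (here `Fin n`). -/
noncomputable def nuOp (n k : ℕ) :
    (List (Fin n) →₀ ℂ) →ₗ[ℂ] (List (Fin n) →₀ ℂ) :=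
  ∑ a ∈ Finset.univ.filter (fun a : Fin k → Fin n => Monotone a),
    (((∏ j : Fin n,
        Nat.factorial ((Finset.univ.filter (fun l : Fin k => a l = j)).card) : ℕ) : ℂ))⁻¹ •
      ((shChain (Fin n) (List.ofFn a)).comp (delChain (Fin n) (List.ofFn a)))


lemma ofFn_comp_perm {n k : ℕ} (c : Fin k → Fin n) (σ : Equiv.Perm (Fin k)) :
    (List.ofFn (c ∘ σ)).Perm (List.ofFn c) := by
  rw [List.ofFn_eq_map, List.ofFn_eq_map]
  have h1 : (List.finRange k).map ⇑σ |>.Perm (List.finRange k) := by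
    refine (List.perm_ext_iff_of_nodup ((List.nodup_finRange k).map σ.injective)
      (List.nodup_finRange k)).mpr fun x => ?_
    simp only [List.mem_map, List.mem_finRange, true_and, iff_true]
    exact ⟨σ⁻¹ x, by simp⟩
  have := h1.map c
  rwa [List.map_map] at this

open scoped Classical in
lemma factorial_smul_nuOp (n k : ℕ) :
    (k.factorial : ℂ) • nuOp n k
      = ∑ c : Fin k → Fin n,
          (shChain (Fin n) (List.ofFn c)).comp (delChain (Fin n) (List.ofFn c)) := by
  rw [nuOp, Finset.smul_sum]
  have hsym := symmetrize k n (fun c =>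
    (((∏ j : Fin n,
        Nat.factorial ((Finset.univ.filter (fun l : Fin k => c l = j)).card) : ℕ) : ℂ))⁻¹ •
      ((shChain (Fin n) (List.ofFn c)).comp (delChain (Fin n) (List.ofFn c)))) ?_
  · rw [hsym]
    refine Finset.sum_congr rfl fun c _ => ?_
    rw [smul_smul, mul_inv_cancel₀, one_smul]
    exact Nat.cast_ne_zero.mpr (Finset.prod_ne_zero_iff.mpr
      (fun j _ => Nat.factorial_ne_zero _))
  · intro c σ
    have hcoef : ∀ j : Fin n,
        (Finset.univ.filter (fun l : Fin k => (c ∘ σ) l = j)).card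
          = (Finset.univ.filter (fun l : Fin k => c l = j)).card := by
      intro j
      refine Finset.card_nbij (i := ⇑σ) ?_ ?_ ?_
      · intro l hl
        simp only [Finset.mem_coe, Finset.mem_filter, Finset.mem_univ, true_and,
          Function.comp_apply] at hl ⊢
        exact hl
      · exact Function.Injective.injOn σ.injective
      · intro l hl
        simp only [Finset.mem_coe, Finset.mem_filter, Finset.mem_univ, true_and,
          Set.mem_image] at hl ⊢
        exact ⟨σ⁻¹ l, by simpa using hl, by simp⟩
    have hchain : shChain (Fin n) (List.ofFn (c ∘ σ)) = shChain (Fin n) (List.ofFn c) :=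
      shChain_perm (ofFn_comp_perm c σ)
    have hchain' : delChain (Fin n) (List.ofFn (c ∘ σ)) = delChain (Fin n) (List.ofFn c) :=
      delChain_perm (ofFn_comp_perm c σ)
    simp only [hcoef, hchain, hchain']

lemma ofFn_eraseIdx {α : Type} : ∀ (k : ℕ) (c : Fin (k+1) → α) (i : Fin (k+1)),
    (List.ofFn c).eraseIdx i.val = List.ofFn (c ∘ i.succAbove) := by
  intro k
  induction k with
  | zero =>
      intro c i
      fin_cases i
      simp
  | succ k ih =>
      intro c i
      induction i using Fin.cases with
      | zero =>
          rw [List.ofFn_succ]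
          simp only [Fin.val_zero, List.eraseIdx_cons_zero]
          congr 1
      | succ j =>
          rw [List.ofFn_succ, show ((j.succ : Fin (k+2)).val) = j.val + 1 from rfl,
            List.eraseIdx_cons_succ, ih (fun t => c t.succ) j]
          rw [List.ofFn_succ (f := c ∘ (j.succ).succAbove)]
          congr 1
          · congr 1
            funext t
            show c _ = c _
            congr 1
            exact (Fin.succ_succAbove_succ j t).symm

lemma ofFn_getD {α : Type} {k : ℕ} (c : Fin k → α) (i : Fin k) (d : α) :
    (List.ofFn c).getD i.val d = c i := by
  rw [List.getD_eq_getElem _ _ (by simp [List.length_ofFn, i.isLt] : i.val < (List.ofFn c).length)]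
  simp

lemma shChain_ofFn_decomp {n k : ℕ} (c : Fin (k+1) → Fin n) (i : Fin (k+1))
    (y : List (Fin n) →₀ ℂ) :
    shChain (Fin n) (List.ofFn c) y
      = shOp (Fin n) (c i) (shChain (Fin n) (List.ofFn (c ∘ i.succAbove)) y) := by
  have hlt : i.val < (List.ofFn c).length := by simp [i.isLt]
  have hperm := perm_getD_cons_eraseIdx (c i) (List.ofFn c) i.val hlt
  rw [shChain_perm hperm.symm]
  rw [ofFn_getD, ofFn_eraseIdx]
  rfl

lemma perm_cons_set {α : Type} [DecidableEq α] (d₀ x : α) (l : List α) (j : ℕ) (h : j < l.length) :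
    (l.getD j d₀ :: l.set j x).Perm (x :: l) :=
  ((perm_set d₀ x l j h).cons _).trans
    ((List.Perm.swap x (l.getD j d₀) (l.eraseIdx j)).trans
      ((perm_getD_cons_eraseIdx d₀ l j h).cons x))

lemma sub_helper {M : Type*} [AddCommGroup M] (A B C : M) : A + B + C - A = B + C := by abel

lemma perc {n k' : ℕ} (a : Fin n) (X : List (Fin n) →₀ ℂ)
    (hlenX : lenOp (Fin n) X = ((n+1 : ℕ) : ℂ) • X)
    (c : Fin (k'+1) → Fin n) :
    shChain (Fin n) (List.ofFn c) (delChain (Fin n) (List.ofFn c) (shOp (Fin n) a X))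
      - shOp (Fin n) a (shChain (Fin n) (List.ofFn c) (delChain (Fin n) (List.ofFn c) X))
    = ∑ i : Fin (k'+1),
        (shOp (Fin n) (c i) (thetaOp (Fin n) (c i) a
            (shChain (Fin n) (List.ofFn (c ∘ i.succAbove))
              (delChain (Fin n) (List.ofFn (c ∘ i.succAbove)) X)))
          - (∑ j ∈ Finset.range k',
              if (List.ofFn (c ∘ i.succAbove)).getD j a = c i
              then shOp (Fin n) (c i) (shChain (Fin n) ((List.ofFn (c ∘ i.succAbove)).set j a)
                (delChain (Fin n) (List.ofFn (c ∘ i.succAbove)) X))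
              else 0)
          + (if c i = a then ((n+1 : ℕ) : ℂ) • shOp (Fin n) (c i)
              (shChain (Fin n) (List.ofFn (c ∘ i.succAbove))
                (delChain (Fin n) (List.ofFn (c ∘ i.succAbove)) X))
             else 0)) := by
  rw [delChain_sh, map_add, map_add, map_sum, map_sum, ← sh_shChain]
  simp only [apply_ite (shChain (Fin n) (List.ofFn c)), map_zero, List.length_ofFn]
  rw [← Fin.sum_univ_eq_sum_range, ← Fin.sum_univ_eq_sum_range, sub_helper,
    ← Finset.sum_add_distrib]
  refine Finset.sum_congr rfl fun i _ => ?_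
  rw [ofFn_getD, ofFn_eraseIdx k' c i]
  simp only [shChain_ofFn_decomp c i]
  have h2 : shChain (Fin n) (List.ofFn (c ∘ i.succAbove))
        (thetaOp (Fin n) (c i) a (delChain (Fin n) (List.ofFn (c ∘ i.succAbove)) X))
      = thetaOp (Fin n) (c i) a (shChain (Fin n) (List.ofFn (c ∘ i.succAbove))
          (delChain (Fin n) (List.ofFn (c ∘ i.succAbove)) X))
        - ∑ j ∈ Finset.range k',
            (if (List.ofFn (c ∘ i.succAbove)).getD j a = c i
             then shChain (Fin n) ((List.ofFn (c ∘ i.succAbove)).set j a)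
               (delChain (Fin n) (List.ofFn (c ∘ i.succAbove)) X)
             else 0) := by
    have h3 := theta_shChain (c i) a (List.ofFn (c ∘ i.succAbove))
      (delChain (Fin n) (List.ofFn (c ∘ i.succAbove)) X)
    rw [List.length_ofFn] at h3
    rw [eq_sub_iff_add_eq, h3]
  rw [h2, map_sub, map_sum, hlenX, map_smul, map_smul]
  simp only [apply_ite (shOp (Fin n) (c i)), map_zero, map_smul]

lemma peri {n k' : ℕ} (a : Fin n) (X : List (Fin n) →₀ ℂ) (i : Fin (k'+1)) :
    (∑ c : Fin (k'+1) → Fin n,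
        (shOp (Fin n) (c i) (thetaOp (Fin n) (c i) a
            (shChain (Fin n) (List.ofFn (c ∘ i.succAbove))
              (delChain (Fin n) (List.ofFn (c ∘ i.succAbove)) X)))
          - (∑ j ∈ Finset.range k',
              if (List.ofFn (c ∘ i.succAbove)).getD j a = c i
              then shOp (Fin n) (c i) (shChain (Fin n) ((List.ofFn (c ∘ i.succAbove)).set j a)
                (delChain (Fin n) (List.ofFn (c ∘ i.succAbove)) X))
              else 0)
          + (if c i = a then ((n+1 : ℕ) : ℂ) • shOp (Fin n) (c i)
              (shChain (Fin n) (List.ofFn (c ∘ i.succAbove))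
                (delChain (Fin n) (List.ofFn (c ∘ i.succAbove)) X))
             else 0)))
    = (∑ b : Fin n, shOp (Fin n) b (thetaOp (Fin n) b a
          (∑ d : Fin k' → Fin n, shChain (Fin n) (List.ofFn d)
            (delChain (Fin n) (List.ofFn d) X))))
      - (k' : ℂ) • shOp (Fin n) a (∑ d : Fin k' → Fin n, shChain (Fin n) (List.ofFn d)
            (delChain (Fin n) (List.ofFn d) X))
      + ((n+1 : ℕ) : ℂ) • shOp (Fin n) a (∑ d : Fin k' → Fin n, shChain (Fin n) (List.ofFn d)
            (delChain (Fin n) (List.ofFn d) X)) := by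
  rw [← Equiv.sum_comp (Fin.insertNthEquiv (fun _ => Fin n) i), Fintype.sum_prod_type]
  have hsa : ∀ (β : Fin n) (d : Fin k' → Fin n),
      ((Fin.insertNthEquiv (fun _ => Fin n) i) (β, d)) ∘ i.succAbove = d :=
    fun β d => funext fun j => by simp
  simp only [Fin.insertNthEquiv_apply, Fin.insertNth_apply_same, hsa]
  simp only [Finset.sum_add_distrib, Finset.sum_sub_distrib]
  congr 1
  · congr 1
    · -- theta piece
      refine Finset.sum_congr rfl fun β _ => ?_
      rw [← map_sum, ← map_sum]
    · -- correction piece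
      rw [Finset.sum_comm]
      have hd : ∀ d : Fin k' → Fin n,
          (∑ β : Fin n, ∑ j ∈ Finset.range k',
            if (List.ofFn d).getD j a = β
            then shOp (Fin n) β (shChain (Fin n) ((List.ofFn d).set j a)
              (delChain (Fin n) (List.ofFn d) X))
            else 0)
          = (k' : ℂ) • shOp (Fin n) a (shChain (Fin n) (List.ofFn d)
              (delChain (Fin n) (List.ofFn d) X)) := by
        intro d
        rw [Finset.sum_comm]
        have hj : ∀ j ∈ Finset.range k',
            (∑ β : Fin n,
              if (List.ofFn d).getD j a = β
              then shOp (Fin n) β (shChain (Fin n) ((List.ofFn d).set j a)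
                (delChain (Fin n) (List.ofFn d) X))
              else 0)
            = shOp (Fin n) a (shChain (Fin n) (List.ofFn d)
                (delChain (Fin n) (List.ofFn d) X)) := by
          intro j hj
          rw [Finset.sum_ite_eq]
          simp only [Finset.mem_univ, if_true]
          rw [← shChain_cons, shChain_perm (perm_cons_set a a (List.ofFn d) j
            (by rw [List.length_ofFn]; exact Finset.mem_range.mp hj)), shChain_cons]
        rw [Finset.sum_congr rfl hj, Finset.sum_const, Finset.card_range,
          ← Nat.cast_smul_eq_nsmul ℂ]
      rw [Finset.sum_congr rfl (fun d _ => hd d), ← Finset.smul_sum, ← map_sum]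
  · -- len piece
    have hb : ∀ β : Fin n,
        (∑ d : Fin k' → Fin n,
          if β = a then ((n+1 : ℕ) : ℂ) • shOp (Fin n) β (shChain (Fin n) (List.ofFn d)
            (delChain (Fin n) (List.ofFn d) X)) else 0)
        = if β = a then ((n+1 : ℕ) : ℂ) • shOp (Fin n) β (∑ d : Fin k' → Fin n,
            shChain (Fin n) (List.ofFn d) (delChain (Fin n) (List.ofFn d) X)) else 0 := by
      intro β
      split_ifs
      · rw [← Finset.smul_sum, ← map_sum]
      · simp
    rw [Finset.sum_congr rfl (fun β _ => hb β), Finset.sum_ite_eq']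
    simp only [Finset.mem_univ, if_true]

/-- On words of length `n`, for every letter `a`:
`ν_k ∘ sh_a − sh_a ∘ ν_k = (n+2−k)·sh_a ∘ ν_{k−1} + Σ_{b=1}^{n} sh_b ∘ θ_{b,a} ∘ ν_{k−1}`. -/
theorem nu_sh_commutator (n k : ℕ) (hk : 1 ≤ k) (a : Fin n)
    (w : List (Fin n)) (hw : w.length = n) :
    nuOp n k (shOp (Fin n) a (Finsupp.single w 1))
        - shOp (Fin n) a (nuOp n k (Finsupp.single w 1))
      = ((n : ℂ) + 2 - (k : ℂ)) • shOp (Fin n) a (nuOp n (k-1) (Finsupp.single w 1))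
        + ∑ b : Fin n,
            shOp (Fin n) b (thetaOp (Fin n) b a (nuOp n (k-1) (Finsupp.single w 1))) := by
  obtain ⟨k', rfl⟩ : ∃ k', k = k' + 1 := ⟨k - 1, (Nat.succ_pred_eq_of_pos hk).symm⟩
  simp only [Nat.add_sub_cancel]
  have hlenX : lenOp (Fin n) (Finsupp.single w 1) = ((n+1 : ℕ) : ℂ) • Finsupp.single w 1 := by
    rw [lenOp_single, hw]
  set X : List (Fin n) →₀ ℂ := Finsupp.single w 1 with hX
  have hfac : (((k'+1).factorial : ℕ) : ℂ) ≠ 0 := Nat.cast_ne_zero.mpr (Nat.factorial_ne_zero _)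
  have hnu1 : ∀ y : List (Fin n) →₀ ℂ, ((k'+1).factorial : ℂ) • nuOp n (k'+1) y
      = ∑ c : Fin (k'+1) → Fin n,
          shChain (Fin n) (List.ofFn c) (delChain (Fin n) (List.ofFn c) y) := by
    intro y
    have := LinearMap.congr_fun (factorial_smul_nuOp n (k'+1)) y
    simpa using this
  have hnu2 : (∑ d : Fin k' → Fin n,
        shChain (Fin n) (List.ofFn d) (delChain (Fin n) (List.ofFn d) X))
      = (k'.factorial : ℂ) • nuOp n k' X := by
    have := LinearMap.congr_fun (factorial_smul_nuOp n k') X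
    simpa using this.symm
  have key : ((k'+1).factorial : ℂ) • (nuOp n (k'+1) (shOp (Fin n) a X)
        - shOp (Fin n) a (nuOp n (k'+1) X))
      = ((k'+1).factorial : ℂ) • (((n : ℂ) + 2 - ((k'+1 : ℕ) : ℂ)) • shOp (Fin n) a (nuOp n k' X)
        + ∑ b : Fin n, shOp (Fin n) b (thetaOp (Fin n) b a (nuOp n k' X))) := by
    calc ((k'+1).factorial : ℂ) • (nuOp n (k'+1) (shOp (Fin n) a X)
            - shOp (Fin n) a (nuOp n (k'+1) X))
        = (∑ c : Fin (k'+1) → Fin n,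
            shChain (Fin n) (List.ofFn c) (delChain (Fin n) (List.ofFn c) (shOp (Fin n) a X)))
          - ∑ c : Fin (k'+1) → Fin n,
              shOp (Fin n) a (shChain (Fin n) (List.ofFn c) (delChain (Fin n) (List.ofFn c) X)) := by
          rw [smul_sub, hnu1, ← map_smul, hnu1, map_sum]
      _ = ∑ c : Fin (k'+1) → Fin n,
            (shChain (Fin n) (List.ofFn c) (delChain (Fin n) (List.ofFn c) (shOp (Fin n) a X))
              - shOp (Fin n) a (shChain (Fin n) (List.ofFn c) (delChain (Fin n) (List.ofFn c) X))) :=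
          by rw [Finset.sum_sub_distrib]
      _ = ∑ c : Fin (k'+1) → Fin n, ∑ i : Fin (k'+1),
            (shOp (Fin n) (c i) (thetaOp (Fin n) (c i) a
                (shChain (Fin n) (List.ofFn (c ∘ i.succAbove))
                  (delChain (Fin n) (List.ofFn (c ∘ i.succAbove)) X)))
              - (∑ j ∈ Finset.range k',
                  if (List.ofFn (c ∘ i.succAbove)).getD j a = c i
                  then shOp (Fin n) (c i) (shChain (Fin n) ((List.ofFn (c ∘ i.succAbove)).set j a)
                    (delChain (Fin n) (List.ofFn (c ∘ i.succAbove)) X))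
                  else 0)
              + (if c i = a then ((n+1 : ℕ) : ℂ) • shOp (Fin n) (c i)
                  (shChain (Fin n) (List.ofFn (c ∘ i.succAbove))
                    (delChain (Fin n) (List.ofFn (c ∘ i.succAbove)) X))
                 else 0)) :=
          Finset.sum_congr rfl fun c _ => perc a X hlenX c
      _ = ∑ i : Fin (k'+1), ∑ c : Fin (k'+1) → Fin n,
            (shOp (Fin n) (c i) (thetaOp (Fin n) (c i) a
                (shChain (Fin n) (List.ofFn (c ∘ i.succAbove))
                  (delChain (Fin n) (List.ofFn (c ∘ i.succAbove)) X)))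
              - (∑ j ∈ Finset.range k',
                  if (List.ofFn (c ∘ i.succAbove)).getD j a = c i
                  then shOp (Fin n) (c i) (shChain (Fin n) ((List.ofFn (c ∘ i.succAbove)).set j a)
                    (delChain (Fin n) (List.ofFn (c ∘ i.succAbove)) X))
                  else 0)
              + (if c i = a then ((n+1 : ℕ) : ℂ) • shOp (Fin n) (c i)
                  (shChain (Fin n) (List.ofFn (c ∘ i.succAbove))
                    (delChain (Fin n) (List.ofFn (c ∘ i.succAbove)) X))
                 else 0)) := Finset.sum_comm
      _ = ∑ _i : Fin (k'+1),
            ((∑ b : Fin n, shOp (Fin n) b (thetaOp (Fin n) b a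
                (∑ d : Fin k' → Fin n, shChain (Fin n) (List.ofFn d)
                  (delChain (Fin n) (List.ofFn d) X))))
              - (k' : ℂ) • shOp (Fin n) a (∑ d : Fin k' → Fin n, shChain (Fin n) (List.ofFn d)
                    (delChain (Fin n) (List.ofFn d) X))
              + ((n+1 : ℕ) : ℂ) • shOp (Fin n) a (∑ d : Fin k' → Fin n,
                    shChain (Fin n) (List.ofFn d) (delChain (Fin n) (List.ofFn d) X))) :=
          Finset.sum_congr rfl fun i _ => peri a X i
      _ = ((k'+1 : ℕ) : ℂ) •
            ((∑ b : Fin n, shOp (Fin n) b (thetaOp (Fin n) b a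
                ((k'.factorial : ℂ) • nuOp n k' X)))
              - (k' : ℂ) • shOp (Fin n) a ((k'.factorial : ℂ) • nuOp n k' X)
              + ((n+1 : ℕ) : ℂ) • shOp (Fin n) a ((k'.factorial : ℂ) • nuOp n k' X)) := by
          rw [Finset.sum_const, Finset.card_univ, Fintype.card_fin, hnu2,
            ← Nat.cast_smul_eq_nsmul ℂ]
      _ = ((k'+1).factorial : ℂ) • (((n : ℂ) + 2 - ((k'+1 : ℕ) : ℂ)) • shOp (Fin n) a (nuOp n k' X)
            + ∑ b : Fin n, shOp (Fin n) b (thetaOp (Fin n) b a (nuOp n k' X))) := by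
          simp only [map_smul, ← Finset.smul_sum]
          match_scalars
          all_goals (push_cast [Nat.factorial_succ]; ring)
  exact smul_right_injective _ hfac key
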